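/- Let N, d be natural numbers with d ≥ 1, a : Fin d a fixed value, m a natural number with m ≥ 0, and x : Fin N → Fin d. Define M : Fin d → Matrix (Fin (m+1)) (Fin (m+1)) ℝ by M v j ν = 1 if (ν : ℕ) = (j : ℕ) + (if v = a then 1 else 0), and M v j ν = 0 otherwise. Then the scalar e₀ᵀ · (M (x 0) · M (x 1) · ⋯ · M (x (N−1))) · e_m, where e₀ and e_m are the standard basis vectors of ℝ^(m+1) at positions 0 and m, equals 1 if the number of indices i with x i = a is exactly m, and equals 0 otherwise. (The single repetition filter layer annihilates exactly those combinations in which the value a does not appear exactly m times.) -/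

import Mathlib

lemma srl_aux {d : ℕ} (a : Fin d) (m : ℕ)
    (M : Fin d → Matrix (Fin (m + 1)) (Fin (m + 1)) ℝ)
    (hM : ∀ (v : Fin d) (j ν : Fin (m + 1)),
      M v j ν = if (ν : ℕ) = (j : ℕ) + (if v = a then 1 else 0) then 1 else 0) :
    ∀ (l : List (Fin d)) (j ν : Fin (m + 1)),
      (l.map M).prod j ν = if (ν : ℕ) = (j : ℕ) + l.countP (· = a) then 1 else 0 := by
  intro l
  induction l with
  | nil =>
    intro j ν
    simp only [List.map_nil, List.prod_nil, List.countP_nil, Nat.add_zero]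
    rw [Matrix.one_apply]
    by_cases h : j = ν
    · simp [h]
    · rw [if_neg h]; refine (if_neg ?_).symm
      exact fun hh => h (Fin.ext hh.symm)
  | cons v l ih =>
    intro j ν
    rw [List.map_cons, List.prod_cons, Matrix.mul_apply]
    set δ : ℕ := if v = a then 1 else 0 with hδ
    by_cases h : (j : ℕ) + δ ≤ m
    · have hlt : (j : ℕ) + δ < m + 1 := Nat.lt_succ_of_le h
      set k0 : Fin (m + 1) := ⟨(j : ℕ) + δ, hlt⟩ with hk0
      have hsum : ∀ k : Fin (m + 1), M v j k * (l.map M).prod k ν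
          = if k = k0 then (l.map M).prod k0 ν else 0 := by
        intro k
        rw [hM]
        by_cases hk : k = k0
        · simp [hk, hk0]; exact fun hh => absurd hδ hh
        · rw [if_neg, if_neg hk, zero_mul]
          exact fun hh => hk (Fin.ext hh)
      rw [Finset.sum_congr rfl (fun k _ => hsum k), Finset.sum_ite_eq', if_pos (Finset.mem_univ _)]
      rw [ih k0 ν]
      have : (k0 : ℕ) + l.countP (· = a) = (j : ℕ) + List.countP (fun b => decide (b = a)) (v :: l) := by
        simp only [hk0, List.countP_cons]
        by_cases hv : v = a <;> simp [hδ, hv] <;> ring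
      rw [this]
    · have h1 : ∀ k : Fin (m + 1), M v j k * (l.map M).prod k ν = 0 := by
        intro k
        rw [hM, if_neg, zero_mul]
        intro hh
        exact h (hh ▸ Nat.lt_succ_iff.mp k.isLt)
      rw [Finset.sum_congr rfl (fun k _ => h1 k), Finset.sum_const_zero]
      rw [if_neg]
      intro hh
      have : (ν : ℕ) ≤ m := Nat.lt_succ_iff.mp ν.isLt
      have hc : List.countP (fun b => decide (b = a)) (v :: l)
          = δ + l.countP (· = a) := by
        simp only [List.countP_cons]
        by_cases hv : v = a <;> simp [hδ, hv] <;> ring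
      rw [hc] at hh
      omega

/-- The single repetition filter layer annihilates exactly those combinations in which the
value `a` does not appear exactly `m` times: with transfer matrices
`M v j ν = ⟦ν = j + ⟦v = a⟧⟧` on the counting signal space `Fin (m+1)`, the scalar
`e₀ᵀ · M (x 0) · ⋯ · M (x (N−1)) · e_m` equals `1` if `#{i | x i = a} = m` and `0`
otherwise. -/
theorem single_repetition_layer_contraction
    (N d : ℕ) (hd : 1 ≤ d) (a : Fin d) (m : ℕ) (hm : 0 ≤ m) (x : Fin N → Fin d)
    (M : Fin d → Matrix (Fin (m + 1)) (Fin (m + 1)) ℝ)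
    (hM : ∀ (v : Fin d) (j ν : Fin (m + 1)),
      M v j ν = if (ν : ℕ) = (j : ℕ) + (if v = a then 1 else 0) then 1 else 0) :
    (List.ofFn (fun i : Fin N => M (x i))).prod ⟨0, Nat.succ_pos m⟩ (Fin.last m)
      = if (Finset.univ.filter (fun i : Fin N => x i = a)).card = m then 1 else 0 := by
  have h1 : List.ofFn (fun i : Fin N => M (x i)) = (List.ofFn x).map M := by
    rw [List.map_ofFn]; rfl
  rw [h1, srl_aux a m M hM]
  have key : ∀ (l : List (Fin d)), l.countP (· = a)
      = (l.map fun b => if b = a then (1:ℕ) else 0).sum := by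
    intro l
    induction l with
    | nil => simp
    | cons b l ih =>
      simp only [List.countP_cons, List.map_cons, List.sum_cons, ih]
      by_cases hb : b = a <;> simp [hb] <;> omega
  have hc : (List.ofFn x).countP (· = a)
      = (Finset.univ.filter (fun i : Fin N => x i = a)).card := by
    rw [key, List.map_ofFn, List.sum_ofFn, Finset.card_filter]
    rfl
  rw [hc]
  simp only [Fin.last, Fin.mk_zero, Nat.zero_add]
  by_cases h : (Finset.univ.filter (fun i : Fin N => x i = a)).card = m <;> simp [h, eq_comm]
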